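/- Let d ≥ 1 and n ≥ 1 be integers. The number of admissible pairs (v,π) for n that additionally satisfy v_d = 0 equals n^d − (n−1)^d. -/

import Mathlib

/-- The right `d`-simplex `S^α = {x ∈ ℝ^d : α ≥ x_1 ≥ x_2 ≥ … ≥ x_d ≥ 0}`
(coordinates indexed by `Fin d`, in order). -/
def Sset (d : ℕ) (α : ℝ) : Set (Fin d → ℝ) :=
  {x | (∀ i : Fin d, 0 ≤ x i ∧ x i ≤ α) ∧ ∀ i j : Fin d, i ≤ j → x j ≤ x i}

/-- The Kuhn simplex `k(v,π) = {x : 1 ≥ (x−v)_{π(1)} ≥ … ≥ (x−v)_{π(d)} ≥ 0}`. -/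
def kuhn (d : ℕ) (v : Fin d → ℝ) (π : Equiv.Perm (Fin d)) : Set (Fin d → ℝ) :=
  {x | (∀ i : Fin d, 0 ≤ x (π i) - v (π i) ∧ x (π i) - v (π i) ≤ 1) ∧
       ∀ i j : Fin d, i ≤ j → x (π j) - v (π j) ≤ x (π i) - v (π i)}

/-- `(v,π)` with `v ∈ ℤ^d` is admissible for `m` if `v ∈ S^{m-1}` and whenever
`v_j = v_{j+1}`, `j` precedes `j+1` in `π`, i.e. `π⁻¹(j) < π⁻¹(j+1)`. -/
def admissible (d m : ℕ) (v : Fin d → ℤ) (π : Equiv.Perm (Fin d)) : Prop :=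
  ((fun i => (v i : ℝ)) ∈ Sset d ((m : ℝ) - 1)) ∧
  ∀ (j : Fin d) (h : (j : ℕ) + 1 < d),
    v j = v ⟨(j : ℕ) + 1, h⟩ → π.symm j < π.symm ⟨(j : ℕ) + 1, h⟩



lemma chain_lt {d : ℕ} (v : Fin d → ℤ) (π : Equiv.Perm (Fin d))
    (hmono : ∀ i j : Fin d, i ≤ j → v j ≤ v i)
    (hadj : ∀ (j : Fin d) (h : (j : ℕ) + 1 < d),
      v j = v ⟨(j : ℕ) + 1, h⟩ → π.symm j < π.symm ⟨(j : ℕ) + 1, h⟩) :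
    ∀ i j : Fin d, i < j → v i = v j → π.symm i < π.symm j := by
  have key : ∀ t : ℕ, ∀ i j : Fin d, (j : ℕ) = (i : ℕ) + t + 1 → v i = v j →
      π.symm i < π.symm j := by
    intro t
    induction t with
    | zero =>
      intro i j hij hv
      have h1 : (i : ℕ) + 1 < d := by have := j.isLt; omega
      have hj : (⟨(i : ℕ) + 1, h1⟩ : Fin d) = j := Fin.ext (by simp; omega)
      rw [← hj]
      exact hadj i h1 (by rw [hj]; exact hv)
    | succ t ih =>
      intro i j hij hv
      have h1 : (i : ℕ) + 1 < d := by have := j.isLt; omega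
      set i' : Fin d := ⟨(i : ℕ) + 1, h1⟩ with hi'
      have hle1 : i ≤ i' := Fin.le_def.mpr (by show (i : ℕ) ≤ (i : ℕ) + 1; omega)
      have hle2 : i' ≤ j := by simp [Fin.le_def, hi']; omega
      have hvi' : v i = v i' := le_antisymm (hv ▸ hmono i' j hle2) (hmono i i' hle1)
      have step1 : π.symm i < π.symm i' := hadj i h1 hvi'
      have step2 : π.symm i' < π.symm j :=
        ih i' j (by simp [hi']; omega) (hvi' ▸ hv)
      exact step1.trans step2
  intro i j hij hv
  exact key ((j : ℕ) - (i : ℕ) - 1) i j (by have := Fin.lt_def.mp hij; omega) hv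
lemma adm_bounds {d n : ℕ} {v : Fin d → ℤ} {π : Equiv.Perm (Fin d)}
    (h : admissible d n v π) : ∀ i, 0 ≤ v i ∧ v i ≤ (n : ℤ) - 1 := by
  intro i
  have h1 := h.1.1 i
  simp only at h1
  constructor
  · exact_mod_cast h1.1
  · have h2 : (v i : ℝ) ≤ (n : ℝ) - 1 := h1.2
    exact_mod_cast h2

lemma adm_mono {d n : ℕ} {v : Fin d → ℤ} {π : Equiv.Perm (Fin d)}
    (h : admissible d n v π) : ∀ i j : Fin d, i ≤ j → v j ≤ v i := by
  intro i j hij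
  have h2 := h.1.2 i j hij
  simp only at h2
  exact_mod_cast h2

lemma adm_sort {d n : ℕ} {v : Fin d → ℤ} {π : Equiv.Perm (Fin d)}
    (h : admissible d n v π) :
    π.symm = Tuple.sort (fun k => -(v (π k))) := by
  rw [Tuple.eq_sort_iff]
  constructor
  · intro i j hij
    simp only [Function.comp_apply, Equiv.apply_symm_apply, neg_le_neg_iff]
    exact adm_mono h i j hij
  · intro i j hij heq
    simp only [Equiv.apply_symm_apply, neg_inj] at heq
    exact chain_lt v π (adm_mono h) h.2 i j hij heq

lemma count_w (d m : ℕ) :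
    Nat.card {w : Fin d → Fin (m + 1) // ∃ k, w k = 0} = (m + 1) ^ d - m ^ d := by
  rw [Nat.card_eq_fintype_card]
  have h1 : ∀ w : Fin d → Fin (m + 1), (∃ k, w k = 0) ↔ ¬ (∀ k, w k ≠ 0) := by
    intro w; push_neg; rfl
  have e1 : Fintype.card {w : Fin d → Fin (m + 1) // ∃ k, w k = 0}
      = Fintype.card {w : Fin d → Fin (m + 1) // ¬ ∀ k, w k ≠ 0} :=
    Fintype.card_congr (Equiv.subtypeEquivRight h1)
  have e2 := Fintype.card_subtype_compl (fun w : Fin d → Fin (m + 1) => ∀ k, w k ≠ 0)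
  have h2 : Fintype.card {w : Fin d → Fin (m + 1) // ∀ k, w k ≠ 0} = m ^ d := by
    have e3 : Fintype.card {w : Fin d → Fin (m + 1) // ∀ k, w k ≠ 0}
        = Fintype.card (∀ _ : Fin d, {x : Fin (m + 1) // x ≠ 0}) :=
      Fintype.card_congr (Equiv.subtypePiEquivPi (p := fun _ x => x ≠ 0))
    have h3 : Fintype.card {x : Fin (m + 1) // x ≠ 0} = m := by
      have := Fintype.card_subtype_compl (fun x : Fin (m + 1) => x = 0)
      rw [Fintype.card_subtype_eq, Fintype.card_fin] at this
      convert this using 2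
      omega
    rw [e3, Fintype.card_pi]
    simp [h3]
  rw [e1, e2, h2]
  congr 1
  simp [Fintype.card_fun]
/-- the number of admissible pairs `(v,π)` for `n` with `v_d = 0`
equals `n^d - (n-1)^d`. -/
theorem card_admissible_base (d n : ℕ) (hd : 1 ≤ d) (hn : 1 ≤ n) :
    Nat.card {p : (Fin d → ℤ) × Equiv.Perm (Fin d) //
        admissible d n p.1 p.2 ∧ p.1 ⟨d - 1, by omega⟩ = 0}
      = n ^ d - (n - 1) ^ d := by
  obtain ⟨m, rfl⟩ : ∃ m, n = m + 1 := ⟨n - 1, by omega⟩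
  have hlast : d - 1 < d := by omega
  have hbd : ∀ (p : {p : (Fin d → ℤ) × Equiv.Perm (Fin d) //
      admissible d (m + 1) p.1 p.2 ∧ p.1 ⟨d - 1, by omega⟩ = 0}) (k : Fin d),
      (p.1.1 (p.1.2 k)).toNat < m + 1 := by
    intro p k
    obtain ⟨ha, hb⟩ := adm_bounds p.2.1 (p.1.2 k)
    omega
  set f : {p : (Fin d → ℤ) × Equiv.Perm (Fin d) //
      admissible d (m + 1) p.1 p.2 ∧ p.1 ⟨d - 1, by omega⟩ = 0} →
      {w : Fin d → Fin (m + 1) // ∃ k, w k = 0} :=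
    fun p => ⟨fun k => ⟨(p.1.1 (p.1.2 k)).toNat, hbd p k⟩,
      ⟨p.1.2.symm ⟨d - 1, hlast⟩, by
        apply Fin.ext
        simp only [Equiv.apply_symm_apply]
        rw [show p.1.1 ⟨d - 1, hlast⟩ = 0 from p.2.2]
        rfl⟩⟩ with hf
  have hinj : Function.Injective f := by
    intro p q hpq
    -- the sorting function is determined by f p
    have key : ∀ r, (fun k => -(r.1.1 (r.1.2 k))) = (fun k => -(((f r).1 k : ℕ) : ℤ)) := by
      intro r
      funext k
      simp only [hf, neg_inj]
      exact (Int.toNat_of_nonneg (adm_bounds r.2.1 (r.1.2 k)).1).symm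
    have hπ : p.1.2 = q.1.2 := by
      have h1 := adm_sort p.2.1
      have h2 := adm_sort q.2.1
      rw [key p, hpq] at h1
      rw [key q] at h2
      have h3 := h1.trans h2.symm
      simpa using congrArg Equiv.symm h3
    have hv : p.1.1 = q.1.1 := by
      funext i
      have e1 : p.1.1 i = (((f p).1 (p.1.2.symm i) : ℕ) : ℤ) := by
        simp only [hf, Equiv.apply_symm_apply]
        exact (Int.toNat_of_nonneg (adm_bounds p.2.1 i).1).symm
      have e2 : q.1.1 i = (((f q).1 (q.1.2.symm i) : ℕ) : ℤ) := by
        simp only [hf, Equiv.apply_symm_apply]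
        exact (Int.toNat_of_nonneg (adm_bounds q.2.1 i).1).symm
      rw [e1, e2, hpq, hπ]
    exact Subtype.ext (Prod.ext hv hπ)
  have hsurj : Function.Surjective f := by
    intro w
    set g : Fin d → ℤ := fun k => -((w.1 k : ℕ) : ℤ) with hg
    set σ : Equiv.Perm (Fin d) := Tuple.sort g with hσ
    obtain ⟨hmono, hties⟩ := (Tuple.eq_sort_iff (f := g) (σ := σ)).mp hσ
    set v : Fin d → ℤ := fun i => ((w.1 (σ i) : ℕ) : ℤ) with hv
    have vmono : ∀ i j : Fin d, i ≤ j → v j ≤ v i := by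
      intro i j hij
      have := hmono hij
      simp only [Function.comp_apply, hg, neg_le_neg_iff] at this
      exact this
    have vnonneg : ∀ i, 0 ≤ v i := fun i => Int.natCast_nonneg _
    have vub : ∀ i, v i ≤ (m : ℤ) := by
      intro i
      have h4 : (w.1 (σ i) : ℕ) ≤ m := Nat.lt_succ_iff.mp (w.1 (σ i)).isLt
      simp only [hv]
      exact_mod_cast h4
    have hadm : admissible d (m + 1) v σ.symm := by
      constructor
      · constructor
        · intro i
          constructor
          · show (0 : ℝ) ≤ (v i : ℝ)
            exact_mod_cast vnonneg i
          · show (v i : ℝ) ≤ ((m + 1 : ℕ) : ℝ) - 1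
            have h5 : ((v i : ℤ) : ℝ) ≤ ((m : ℤ) : ℝ) := by exact_mod_cast vub i
            push_cast at h5 ⊢
            linarith
        · intro i j hij
          show (v j : ℝ) ≤ (v i : ℝ)
          exact_mod_cast vmono i j hij
      · intro j h hvj
        simp only [Equiv.symm_symm]
        apply hties j ⟨(j : ℕ) + 1, h⟩
        · exact Fin.lt_def.mpr (by simp)
        · simp only [hg, neg_inj]
          simp only [hv] at hvj
          exact_mod_cast hvj
    have hzero : v ⟨d - 1, hlast⟩ = 0 := by
      obtain ⟨k, hk⟩ := w.2
      have h0 : v (σ.symm k) = 0 := by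
        simp only [hv, Equiv.apply_symm_apply, hk]
        rfl
      have hle : σ.symm k ≤ ⟨d - 1, hlast⟩ := by
        rw [Fin.le_def]
        have := (σ.symm k).isLt
        simp only []
        omega
      have := vmono (σ.symm k) ⟨d - 1, hlast⟩ hle
      rw [h0] at this
      exact le_antisymm this (vnonneg _)
    refine ⟨⟨(v, σ.symm), hadm, hzero⟩, ?_⟩
    apply Subtype.ext
    funext k
    apply Fin.ext
    simp only [hf, hv, Equiv.symm_symm, Equiv.apply_symm_apply]
    simp [Int.toNat_natCast]
  rw [Nat.card_eq_of_bijective f ⟨hinj, hsurj⟩, count_w]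
  simp
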